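/- Let n ≥ 1, let (a_{ij}) be a symmetric positive definite real n×n matrix, and let b = (b_i) ∈ ℝⁿ. For y ∈ ℝⁿ \ {0} set α(y) := √(Σ a_{ij} y^i y^j), β(y) := Σ b_i y^i, s(y) := β(y)/α(y), and y_i := Σ_j a_{ij} y^j. Then for all indices j, k, l and all y ≠ 0, the third partial derivative of s satisfies: ∂³s/∂y^j∂y^k∂y^l = α^{−5}·{ [α(3s·y_j − α·b_j)·a_{lk} + 3·b_k·y_l·y_j] + [α(3s·y_k − α·b_k)·a_{jl} + 3·b_l·y_j·y_k] + [α(3s·y_l − α·b_l)·a_{kj} + 3·b_j·y_k·y_l] − (15s/α)·y_k·y_l·y_j }. -/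

import Mathlib

open Set

/-- Partial derivative of `f : (Fin n → ℝ) → ℝ` in the `i`-th coordinate
direction. -/
noncomputable def pd {n : ℕ} (i : Fin n) (f : (Fin n → ℝ) → ℝ)
    (y : Fin n → ℝ) : ℝ :=
  fderiv ℝ f y (Pi.single i 1)

namespace S19
open ContinuousLinearMap
variable {n : ℕ}

noncomputable def Qf (a : Fin n → Fin n → ℝ) (x : Fin n → ℝ) : ℝ :=
  ∑ i, ∑ j, a i j * x i * x j
noncomputable def Bf (b : Fin n → ℝ) (x : Fin n → ℝ) : ℝ := ∑ i, b i * x i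
noncomputable def Yf (a : Fin n → Fin n → ℝ) (x : Fin n → ℝ) (i : Fin n) : ℝ :=
  ∑ j, a i j * x j
noncomputable def LB (b : Fin n → ℝ) : (Fin n → ℝ) →L[ℝ] ℝ :=
  ∑ i, b i • (proj i : (Fin n → ℝ) →L[ℝ] ℝ)
noncomputable def LY (a : Fin n → Fin n → ℝ) (i : Fin n) : (Fin n → ℝ) →L[ℝ] ℝ :=
  ∑ j, a i j • (proj j : (Fin n → ℝ) →L[ℝ] ℝ)
noncomputable def LQ (a : Fin n → Fin n → ℝ) (x : Fin n → ℝ) : (Fin n → ℝ) →L[ℝ] ℝ :=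
  ∑ i, ∑ j, ((a i j * x i) • (proj j : (Fin n → ℝ) →L[ℝ] ℝ)
      + x j • ((a i j) • (proj i : (Fin n → ℝ) →L[ℝ] ℝ)))

lemma LB_single (b : Fin n → ℝ) (l : Fin n) : LB b (Pi.single l 1) = b l := by
  simp [LB, Pi.single_apply]

lemma LY_single (a : Fin n → Fin n → ℝ) (i l : Fin n) :
    LY a i (Pi.single l 1) = a i l := by
  simp [LY, Pi.single_apply]

lemma LQ_single (a : Fin n → Fin n → ℝ) (hsymm : ∀ i j, a i j = a j i)
    (x : Fin n → ℝ) (l : Fin n) : LQ a x (Pi.single l 1) = 2 * Yf a x l := by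
  simp only [LQ, Yf, sum_apply, add_apply, smul_apply, proj_apply, smul_eq_mul,
    Pi.single_apply, mul_ite, mul_one, mul_zero, Finset.sum_add_distrib,
    Finset.sum_ite_eq', Finset.mem_univ, if_true]
  rw [Finset.sum_comm]
  simp only [Finset.sum_ite_eq', Finset.mem_univ, if_true]
  rw [show (∑ i, a i l * x i) = ∑ i, a l i * x i from
      Finset.sum_congr rfl fun i _ => by rw [hsymm],
    show (∑ i, x i * a l i) = ∑ i, a l i * x i from
      Finset.sum_congr rfl fun i _ => mul_comm _ _]
  ring

lemma hasFDerivAt_B (b : Fin n → ℝ) (x : Fin n → ℝ) :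
    HasFDerivAt (Bf b) (LB b) x :=
  HasFDerivAt.fun_sum fun i _ =>
    ((proj i : (Fin n → ℝ) →L[ℝ] ℝ).hasFDerivAt (x := x)).const_mul (b i)

lemma hasFDerivAt_Y (a : Fin n → Fin n → ℝ) (i : Fin n) (x : Fin n → ℝ) :
    HasFDerivAt (fun x => Yf a x i) (LY a i) x :=
  HasFDerivAt.fun_sum fun jj _ =>
    ((proj jj : (Fin n → ℝ) →L[ℝ] ℝ).hasFDerivAt (x := x)).const_mul (a i jj)

lemma hasFDerivAt_Q (a : Fin n → Fin n → ℝ) (x : Fin n → ℝ) :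
    HasFDerivAt (Qf a) (LQ a x) x :=
  HasFDerivAt.fun_sum fun i _ => HasFDerivAt.fun_sum fun jj _ =>
    (((proj i : (Fin n → ℝ) →L[ℝ] ℝ).hasFDerivAt (x := x)).const_mul (a i jj)).fun_mul
      ((proj jj : (Fin n → ℝ) →L[ℝ] ℝ).hasFDerivAt (x := x))

lemma hasFDerivAt_rpowQ (a : Fin n → Fin n → ℝ) {x : Fin n → ℝ}
    (hx : 0 < Qf a x) (r : ℝ) :
    HasFDerivAt (fun x => Qf a x ^ r) ((r * Qf a x ^ (r - 1)) • LQ a x) x :=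
  (Real.hasDerivAt_rpow_const (Or.inl hx.ne')).comp_hasFDerivAt x (hasFDerivAt_Q a x)

noncomputable def G0 (a : Fin n → Fin n → ℝ) (b : Fin n → ℝ)
    (x : Fin n → ℝ) : ℝ :=
  Bf b x * Qf a x ^ (-(1:ℝ)/2)

noncomputable def G1 (a : Fin n → Fin n → ℝ) (b : Fin n → ℝ) (l : Fin n)
    (x : Fin n → ℝ) : ℝ :=
  b l * Qf a x ^ (-(1:ℝ)/2) - Bf b x * Yf a x l * Qf a x ^ (-(3:ℝ)/2)

noncomputable def G2 (a : Fin n → Fin n → ℝ) (b : Fin n → ℝ) (k l : Fin n)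
    (x : Fin n → ℝ) : ℝ :=
  -((b l * Yf a x k + b k * Yf a x l + Bf b x * a l k) * Qf a x ^ (-(3:ℝ)/2))
    + 3 * (Bf b x * Yf a x l * Yf a x k) * Qf a x ^ (-(5:ℝ)/2)

noncomputable def G3 (a : Fin n → Fin n → ℝ) (b : Fin n → ℝ) (j k l : Fin n)
    (x : Fin n → ℝ) : ℝ :=
  -((b l * a k j + b k * a l j + b j * a l k) * Qf a x ^ (-(3:ℝ)/2))
    + 3 * (b l * Yf a x k * Yf a x j + b k * Yf a x l * Yf a x j
        + Bf b x * a l k * Yf a x j + b j * Yf a x l * Yf a x k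
        + Bf b x * a l j * Yf a x k + Bf b x * Yf a x l * a k j)
        * Qf a x ^ (-(5:ℝ)/2)
    - 15 * (Bf b x * Yf a x l * Yf a x k * Yf a x j) * Qf a x ^ (-(7:ℝ)/2)

lemma deriv1 (a : Fin n → Fin n → ℝ) (hsymm : ∀ i j, a i j = a j i)
    (b : Fin n → ℝ) {x : Fin n → ℝ} (hx : 0 < Qf a x) (l : Fin n) :
    fderiv ℝ (G0 a b) x (Pi.single l 1) = G1 a b l x := by
  have h := (hasFDerivAt_B b x).fun_mul (hasFDerivAt_rpowQ a hx (-(1:ℝ)/2))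
  rw [show G0 a b = fun x => Bf b x * Qf a x ^ (-(1:ℝ)/2) from rfl, h.fderiv]
  simp only [add_apply, smul_apply, smul_eq_mul, LB_single, LQ_single a hsymm]
  rw [show (-(1:ℝ)/2 - 1) = -(3:ℝ)/2 by norm_num]
  unfold G1; ring

lemma deriv2 (a : Fin n → Fin n → ℝ) (hsymm : ∀ i j, a i j = a j i)
    (b : Fin n → ℝ) {x : Fin n → ℝ} (hx : 0 < Qf a x) (k l : Fin n) :
    fderiv ℝ (G1 a b l) x (Pi.single k 1) = G2 a b k l x := by
  have h := ((hasFDerivAt_rpowQ a hx (-(1:ℝ)/2)).const_mul (b l)).fun_sub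
    (((hasFDerivAt_B b x).fun_mul (hasFDerivAt_Y a l x)).fun_mul
      (hasFDerivAt_rpowQ a hx (-(3:ℝ)/2)))
  rw [show G1 a b l = fun x => b l * Qf a x ^ (-(1:ℝ)/2)
      - Bf b x * Yf a x l * Qf a x ^ (-(3:ℝ)/2) from rfl, h.fderiv]
  simp only [add_apply, sub_apply, smul_apply, smul_eq_mul, LB_single,
    LY_single, LQ_single a hsymm]
  rw [show (-(1:ℝ)/2 - 1) = -(3:ℝ)/2 by norm_num,
    show (-(3:ℝ)/2 - 1) = -(5:ℝ)/2 by norm_num]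
  unfold G2; ring

lemma deriv3 (a : Fin n → Fin n → ℝ) (hsymm : ∀ i j, a i j = a j i)
    (b : Fin n → ℝ) {x : Fin n → ℝ} (hx : 0 < Qf a x) (j k l : Fin n) :
    fderiv ℝ (G2 a b k l) x (Pi.single j 1) = G3 a b j k l x := by
  have hP := (((hasFDerivAt_Y a k x).const_mul (b l)).fun_add
      ((hasFDerivAt_Y a l x).const_mul (b k))).fun_add
      ((hasFDerivAt_B b x).mul_const (a l k))
  have hR := ((hasFDerivAt_B b x).fun_mul (hasFDerivAt_Y a l x)).fun_mul
      (hasFDerivAt_Y a k x)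
  have h := ((hP.fun_mul (hasFDerivAt_rpowQ a hx (-(3:ℝ)/2))).fun_neg).fun_add
      ((hR.const_mul 3).fun_mul (hasFDerivAt_rpowQ a hx (-(5:ℝ)/2)))
  rw [show G2 a b k l = fun x =>
      -((b l * Yf a x k + b k * Yf a x l + Bf b x * a l k) * Qf a x ^ (-(3:ℝ)/2))
        + 3 * (Bf b x * Yf a x l * Yf a x k) * Qf a x ^ (-(5:ℝ)/2) from rfl,
    h.fderiv]
  simp only [add_apply, sub_apply, neg_apply, smul_apply, smul_eq_mul,
    LB_single, LY_single, LQ_single a hsymm]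
  rw [show (-(3:ℝ)/2 - 1) = -(5:ℝ)/2 by norm_num,
    show (-(5:ℝ)/2 - 1) = -(7:ℝ)/2 by norm_num]
  unfold G3; ring

lemma rpow_neg_half (q : ℝ) (hq : 0 < q) (m : ℕ) :
    q ^ (-(m:ℝ)/2) = (Real.sqrt q ^ m)⁻¹ := by
  rw [Real.sqrt_eq_rpow, ← Real.rpow_natCast (q ^ ((1:ℝ)/2)) m,
    ← Real.rpow_mul hq.le, ← Real.rpow_neg hq.le]
  congr 1
  ring

end S19

/-- formula (3.13): the third coordinate partial derivatives of
s = β/α, where α(y) = √(Σ aᵢⱼyⁱyʲ) and β(y) = Σ bᵢyⁱ with (aᵢⱼ) symmetric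
positive definite, are given by the displayed cyclic formula. -/
theorem stmt_19 (n : ℕ) (hn : 1 ≤ n) (a : Fin n → Fin n → ℝ)
    (hsymm : ∀ i j, a i j = a j i)
    (hpos : ∀ y : Fin n → ℝ, y ≠ 0 → 0 < ∑ i, ∑ j, a i j * y i * y j)
    (b : Fin n → ℝ)
    (α β sf : (Fin n → ℝ) → ℝ) (yl : (Fin n → ℝ) → Fin n → ℝ)
    (hα : ∀ y, α y = Real.sqrt (∑ i, ∑ j, a i j * y i * y j))
    (hβ : ∀ y, β y = ∑ i, b i * y i)
    (hsf : ∀ y, sf y = β y / α y)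
    (hyl : ∀ y i, yl y i = ∑ j, a i j * y j) :
    ∀ y : Fin n → ℝ, y ≠ 0 → ∀ j k l : Fin n,
      pd j (pd k (pd l sf)) y =
        (1 / α y ^ 5) *
          ((α y * (3 * sf y * yl y j - α y * b j) * a l k +
              3 * b k * yl y l * yl y j) +
           (α y * (3 * sf y * yl y k - α y * b k) * a j l +
              3 * b l * yl y j * yl y k) +
           (α y * (3 * sf y * yl y l - α y * b l) * a k j +
              3 * b j * yl y k * yl y l) -
           (15 * sf y / α y) * (yl y k * yl y l * yl y j)) := by
  intro y hy j k l
  have hQpos : ∀ x : Fin n → ℝ, x ≠ 0 → 0 < S19.Qf a x := hpos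
  -- sf agrees with G0 away from 0
  have hsfG0 : ∀ x : Fin n → ℝ, x ≠ 0 → sf x = S19.G0 a b x := by
    intro x hx
    have hq := hQpos x hx
    rw [hsf, hβ, hα]
    show _ = S19.Bf b x * S19.Qf a x ^ (-(1:ℝ)/2)
    rw [show (∑ i, b i * x i) = S19.Bf b x from rfl,
      show (∑ i, ∑ j, a i j * x i * x j) = S19.Qf a x from rfl,
      Real.sqrt_eq_rpow, div_eq_mul_inv, ← Real.rpow_neg hq.le]
    norm_num
  have hmem : ∀ x : Fin n → ℝ, x ≠ 0 → {z : Fin n → ℝ | z ≠ 0} ∈ nhds x :=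
    fun x hx => isOpen_ne.mem_nhds hx
  -- level 1
  have step1 : ∀ x : Fin n → ℝ, x ≠ 0 → pd l sf x = S19.G1 a b l x := by
    intro x hx
    have heq : sf =ᶠ[nhds x] S19.G0 a b :=
      Filter.eventuallyEq_of_mem (hmem x hx) hsfG0
    rw [pd, heq.fderiv_eq, S19.deriv1 a hsymm b (hQpos x hx) l]
  -- level 2
  have step2 : ∀ x : Fin n → ℝ, x ≠ 0 → pd k (pd l sf) x = S19.G2 a b k l x := by
    intro x hx
    have heq : pd l sf =ᶠ[nhds x] S19.G1 a b l :=
      Filter.eventuallyEq_of_mem (hmem x hx) step1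
    rw [pd, heq.fderiv_eq, S19.deriv2 a hsymm b (hQpos x hx) k l]
  -- level 3
  have step3 : pd j (pd k (pd l sf)) y = S19.G3 a b j k l y := by
    have heq : pd k (pd l sf) =ᶠ[nhds y] S19.G2 a b k l :=
      Filter.eventuallyEq_of_mem (hmem y hy) step2
    rw [pd, heq.fderiv_eq, S19.deriv3 a hsymm b (hQpos y hy) j k l]
  rw [step3]
  -- final algebra
  have hq := hQpos y hy
  have e3 : S19.Qf a y ^ (-(3:ℝ)/2) = (Real.sqrt (S19.Qf a y) ^ 3)⁻¹ := by
    rw [show (-(3:ℝ)/2) = -((3:ℕ):ℝ)/2 by norm_num]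
    exact S19.rpow_neg_half _ hq 3
  have e5 : S19.Qf a y ^ (-(5:ℝ)/2) = (Real.sqrt (S19.Qf a y) ^ 5)⁻¹ := by
    rw [show (-(5:ℝ)/2) = -((5:ℕ):ℝ)/2 by norm_num]
    exact S19.rpow_neg_half _ hq 5
  have e7 : S19.Qf a y ^ (-(7:ℝ)/2) = (Real.sqrt (S19.Qf a y) ^ 7)⁻¹ := by
    rw [show (-(7:ℝ)/2) = -((7:ℕ):ℝ)/2 by norm_num]
    exact S19.rpow_neg_half _ hq 7
  have hαA : α y = Real.sqrt (S19.Qf a y) := by rw [hα]; rfl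
  have hBβ : β y = S19.Bf b y := by rw [hβ]; rfl
  have hYyl : ∀ i, yl y i = S19.Yf a y i := fun i => by rw [hyl]; rfl
  obtain ⟨A, hA0, hAdef⟩ : ∃ A : ℝ, 0 < A ∧ Real.sqrt (S19.Qf a y) = A :=
    ⟨_, Real.sqrt_pos.2 hq, rfl⟩
  simp only [S19.G3, e3, e5, e7, hsf, hαA, hBβ, hYyl, hAdef, hsymm j l]
  field_simp
  ring
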